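/- arXiv:2510.22501 — 6 statements merged into one kernel-verified Lean document; each statement's English description precedes it below -/
import Mathlib

section
/- If there exists a vector q ∈ (0,1]ⁿ such that ρ(M(q)) < 1, where M(q) = I − C(q) + (A + Q(I − A))·S0·B, then x(t) → 0 and y(t) → 0 (entrywise) as t → ∞. (Theorem 1, second part, and its Corollary: spectral radius of M(q) below 1 forces both infected and delayable states to vanish.) -/
open Matrix Filter Finset
open scoped ENNReal NNReal

/-- Spectral radius of a real square matrix: the maximum modulus of its complex
eigenvalues (elements of the spectrum of the matrix viewed over `ℂ`). -/
noncomputable def specRad {n : ℕ} (M : Matrix (Fin n) (Fin n) ℝ) : ℝ :=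
  sSup {r : ℝ | ∃ μ : ℂ, μ ∈ spectrum ℂ (M.map (Complex.ofReal)) ∧ r = ‖μ‖}

section gelfand

attribute [local instance] Matrix.linftyOpNormedRing Matrix.linftyOpNormedAlgebra

lemma pow_entry_tendsto_zero {n : ℕ} (M : Matrix (Fin n) (Fin n) ℝ)
    (h : specRad M < 1) (i j : Fin n) :
    Tendsto (fun t => (M ^ t) i j) atTop (nhds 0) := by
  set Mc : Matrix (Fin n) (Fin n) ℂ := M.map Complex.ofReal with hMc
  have hmap : ∀ t : ℕ, (M ^ t).map Complex.ofReal = Mc ^ t := by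
    intro t
    exact map_pow (Complex.ofRealHom.mapMatrix (m := Fin n)) M t
  -- spectral radius bound
  have hbdd : BddAbove {r : ℝ | ∃ μ : ℂ, μ ∈ spectrum ℂ Mc ∧ r = ‖μ‖} := by
    have hset : {r : ℝ | ∃ μ : ℂ, μ ∈ spectrum ℂ Mc ∧ r = ‖μ‖}
        = (‖·‖) '' spectrum ℂ Mc := by
      ext r
      simp only [Set.mem_setOf_eq, Set.mem_image]
      constructor
      · rintro ⟨μ, hμ, rfl⟩; exact ⟨μ, hμ, rfl⟩
      · rintro ⟨μ, hμ, rfl⟩; exact ⟨μ, hμ, rfl⟩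
    rw [hset]
    exact ((spectrum.isCompact Mc).image continuous_norm).bddAbove
  have hsp : spectralRadius ℂ Mc < 1 := by
    have hle : spectralRadius ℂ Mc ≤ ENNReal.ofReal (specRad M) := by
      rw [spectralRadius]
      refine iSup₂_le fun μ hμ => ?_
      have habs : ‖μ‖ ≤ specRad M := le_csSup hbdd ⟨μ, hμ, rfl⟩
      have : (‖μ‖₊ : ℝ≥0∞) = ENNReal.ofReal ‖μ‖ := by
        rw [ENNReal.ofReal, ← norm_toNNReal]
      rw [this]
      exact ENNReal.ofReal_le_ofReal habs
    exact lt_of_le_of_lt hle (ENNReal.ofReal_lt_one.mpr h)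
  -- Gelfand
  have hG := spectrum.pow_nnnorm_pow_one_div_tendsto_nhds_spectralRadius Mc
  obtain ⟨r, hr1, hr2⟩ := ENNReal.lt_iff_exists_nnreal_btwn.mp hsp
  have hev : ∀ᶠ k : ℕ in atTop, (‖Mc ^ k‖₊ : ℝ≥0∞) ^ (1 / (k : ℝ)) < (r : ℝ≥0∞) :=
    hG.eventually_lt_const hr1
  have hr2' : (r : ℝ) < 1 := by exact_mod_cast hr2
  have hnorm : ∀ᶠ k : ℕ in atTop, ‖Mc ^ k‖ ≤ (r : ℝ) ^ k := by
    filter_upwards [hev, eventually_ge_atTop 1] with k hk hk1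
    have hk0 : (k : ℝ) ≠ 0 := by positivity
    have h3 := ENNReal.rpow_lt_rpow hk (by positivity : (0:ℝ) < (k : ℝ))
    rw [← ENNReal.rpow_mul, one_div, inv_mul_cancel₀ hk0, ENNReal.rpow_one,
      ENNReal.rpow_natCast, ← ENNReal.coe_pow, ENNReal.coe_lt_coe] at h3
    calc ‖Mc ^ k‖ = ((‖Mc ^ k‖₊ : ℝ≥0) : ℝ) := rfl
      _ ≤ ((r ^ k : ℝ≥0) : ℝ) := by exact_mod_cast h3.le
      _ = (r : ℝ) ^ k := by push_cast; ring
  have hentry : ∀ᶠ k : ℕ in atTop, ‖(M ^ k) i j‖ ≤ (r : ℝ) ^ k := by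
    filter_upwards [hnorm] with k hk
    have h1 : ‖(Mc ^ k) i j‖ ≤ ‖Mc ^ k‖ := by
      rw [← coe_nnnorm, ← coe_nnnorm]
      refine NNReal.coe_le_coe.mpr ?_
      rw [Matrix.linfty_opNNNorm_def]
      calc ‖(Mc ^ k) i j‖₊ ≤ ∑ l, ‖(Mc ^ k) i l‖₊ :=
            Finset.single_le_sum (f := fun l => ‖(Mc ^ k) i l‖₊) (fun _ _ => zero_le) (Finset.mem_univ j)
        _ ≤ _ := Finset.le_sup (f := fun i => ∑ l, ‖(Mc ^ k) i l‖₊) (Finset.mem_univ i)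
    have h2 : (Mc ^ k) i j = Complex.ofReal ((M ^ k) i j) := by
      rw [← hmap]; rfl
    rw [h2, Complex.norm_real] at h1
    exact h1.trans hk
  exact squeeze_zero_norm' hentry
    (tendsto_pow_atTop_nhds_zero_of_lt_one r.coe_nonneg hr2')

end gelfand

/-- Theorem 1 (second part) and its Corollary: if `ρ(M(q)) < 1` for some
`q ∈ (0,1]ⁿ`, then `x(t) → 0` and `y(t) → 0`. -/
theorem sdir_convergence
    (n : ℕ) (hn : 1 ≤ n) (α ω δ δ' s : Fin n → ℝ)
    (hα : ∀ i, 0 ≤ α i ∧ α i ≤ 1) (hω : ∀ i, 0 ≤ ω i ∧ ω i ≤ 1)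
    (hδ : ∀ i, 0 ≤ δ i ∧ δ i ≤ 1) (hδ' : ∀ i, 0 ≤ δ' i ∧ δ' i ≤ 1)
    (hs : ∀ i, 0 ≤ s i ∧ s i ≤ 1) (hωδ' : ∀ i, ω i + δ' i ≤ 1)
    (B : Matrix (Fin n) (Fin n) ℝ) (hB : ∀ i j, 0 ≤ B i j)
    (x y : ℕ → Fin n → ℝ)
    (hx : ∀ t i, 0 ≤ x t i) (hy : ∀ t i, 0 ≤ y t i)
    (hdynx : ∀ t, x (t + 1) =
      (1 - Matrix.diagonal δ + Matrix.diagonal α * Matrix.diagonal s * B) *ᵥ x t +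
        Matrix.diagonal ω *ᵥ y t)
    (hdyny : ∀ t, y (t + 1) =
      ((1 - Matrix.diagonal α) * Matrix.diagonal s * B) *ᵥ x t +
        (1 - Matrix.diagonal ω - Matrix.diagonal δ') *ᵥ y t)
    (hq : ∃ q : Fin n → ℝ, (∀ i, 0 < q i ∧ q i ≤ 1) ∧
      specRad
        (1 - Matrix.diagonal (fun i => min (δ i) (δ' i + (1 - 1 / q i) * ω i)) +
          (Matrix.diagonal α + Matrix.diagonal q * (1 - Matrix.diagonal α)) *
            Matrix.diagonal s * B) < 1) :
    Tendsto x atTop (nhds 0) ∧ Tendsto y atTop (nhds 0) := by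
  obtain ⟨q, hq01, hρ⟩ := hq
  set c : Fin n → ℝ := fun i => min (δ i) (δ' i + (1 - 1 / q i) * ω i) with hc
  set e : Fin n → ℝ := fun i => α i + q i * (1 - α i) with he
  set M : Matrix (Fin n) (Fin n) ℝ :=
    1 - Matrix.diagonal c +
      (Matrix.diagonal α + Matrix.diagonal q * (1 - Matrix.diagonal α)) *
        Matrix.diagonal s * B with hM
  -- rewrite M as diagonal + diagonal * B
  have hMeq : M = Matrix.diagonal (fun i => 1 - c i) +
      Matrix.diagonal (fun i => e i * s i) * B := by
    rw [hM, ← Matrix.diagonal_one, Matrix.diagonal_sub, Matrix.diagonal_sub,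
      Matrix.diagonal_mul_diagonal, Matrix.diagonal_add, Matrix.diagonal_mul_diagonal]
  -- basic bounds
  have hcle : ∀ i, c i ≤ δ i := fun i => min_le_left _ _
  have hcle' : ∀ i, c i ≤ δ' i + (1 - 1 / q i) * ω i := fun i => min_le_right _ _
  have hM_nonneg : ∀ i j, 0 ≤ M i j := by
    intro i j
    rw [hMeq, Matrix.add_apply, Matrix.diagonal_mul]
    have h1 : 0 ≤ e i * s i * B i j := by
      have he0 : 0 ≤ e i := by
        simp only [he]
        nlinarith [(hα i).1, mul_nonneg (hq01 i).1.le (by linarith [(hα i).2] : (0:ℝ) ≤ 1 - α i)]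
      have := (hs i).1; have := hB i j
      positivity
    have h2 : 0 ≤ 1 - c i := by
      have := hcle i; have := (hδ i).2; linarith
    rcases eq_or_ne i j with rfl | hne
    · rw [Matrix.diagonal_apply_eq]; linarith
    · rw [Matrix.diagonal_apply_ne _ hne]; linarith
  -- the comparison vector
  set v : ℕ → Fin n → ℝ := fun t i => x t i + q i * y t i with hv
  have hv_nonneg : ∀ t i, 0 ≤ v t i := by
    intro t i
    have := hx t i; have := hy t i; have := (hq01 i).1
    simp only [hv]; nlinarith
  have hxv : ∀ t i, x t i ≤ v t i := by
    intro t i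
    have := hy t i; have := (hq01 i).1
    simp only [hv]; nlinarith
  -- M *ᵥ w entry formula
  have hMv : ∀ (w : Fin n → ℝ) (i : Fin n),
      (M *ᵥ w) i = (1 - c i) * w i + e i * s i * (B *ᵥ w) i := by
    intro w i
    rw [hMeq, Matrix.add_mulVec, ← Matrix.mulVec_mulVec, Pi.add_apply,
      Matrix.mulVec_diagonal, Matrix.mulVec_diagonal]
  -- key step inequality
  have hstep : ∀ t i, v (t + 1) i ≤ (M *ᵥ v t) i := by
    intro t i
    have hxe : x (t + 1) i =
        x t i - δ i * x t i + α i * s i * (B *ᵥ x t) i + ω i * y t i := by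
      have := congrFun (hdynx t) i
      rw [this, Pi.add_apply, Matrix.add_mulVec, Matrix.sub_mulVec, Pi.add_apply,
        Pi.sub_apply, Matrix.one_mulVec, Matrix.mulVec_diagonal,
        ← Matrix.mulVec_mulVec, ← Matrix.mulVec_mulVec, Matrix.mulVec_diagonal,
        Matrix.mulVec_diagonal, Matrix.mulVec_diagonal]
      ring
    have hye : y (t + 1) i =
        (1 - α i) * s i * (B *ᵥ x t) i + (y t i - ω i * y t i - δ' i * y t i) := by
      have := congrFun (hdyny t) i
      have h1 : (1 : Matrix (Fin n) (Fin n) ℝ) - Matrix.diagonal α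
          = Matrix.diagonal (fun i => 1 - α i) := by
        rw [← Matrix.diagonal_one, Matrix.diagonal_sub]
      have h2 : (1 : Matrix (Fin n) (Fin n) ℝ) - Matrix.diagonal ω - Matrix.diagonal δ'
          = Matrix.diagonal (fun i => 1 - ω i - δ' i) := by
        rw [← Matrix.diagonal_one, Matrix.diagonal_sub, Matrix.diagonal_sub]
      rw [this, h1, h2, Pi.add_apply, Matrix.diagonal_mul_diagonal,
        ← Matrix.mulVec_mulVec, Matrix.mulVec_diagonal, Matrix.mulVec_diagonal]
      ring
    have hBmono : (B *ᵥ x t) i ≤ (B *ᵥ v t) i := by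
      simp only [Matrix.mulVec, dotProduct]
      refine Finset.sum_le_sum fun j _ => ?_
      exact mul_le_mul_of_nonneg_left (hxv t j) (hB i j)
    have hes : 0 ≤ e i * s i := by
      have h3 := (hs i).1
      have he0 : 0 ≤ e i := by
        simp only [he]
        nlinarith [(hα i).1, mul_nonneg (hq01 i).1.le (by linarith [(hα i).2] : (0:ℝ) ≤ 1 - α i)]
      positivity
    have hqc : q i * c i ≤ q i * δ' i + (q i - 1) * ω i := by
      have h2 := (hq01 i).1
      have h4 := mul_le_mul_of_nonneg_left (hcle' i) h2.le
      have hrw : q i * (δ' i + (1 - 1 / q i) * ω i) = q i * δ' i + (q i - 1) * ω i := by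
        field_simp
      linarith [h4, hrw.le, hrw.ge]
    rw [hMv]
    have hlhs : v (t + 1) i =
        (1 - δ i) * x t i + e i * s i * (B *ᵥ x t) i
          + (ω i + q i * (1 - ω i - δ' i)) * y t i := by
      simp only [hv, hxe, hye, he]; ring
    rw [hlhs]
    have h1 : e i * s i * (B *ᵥ x t) i ≤ e i * s i * (B *ᵥ v t) i :=
      mul_le_mul_of_nonneg_left hBmono hes
    have hxn := hx t i; have hyn := hy t i
    have hcd := hcle i
    have hvi : v t i = x t i + q i * y t i := rfl
    have t1 : c i * x t i ≤ δ i * x t i := mul_le_mul_of_nonneg_right hcd hxn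
    have t2 : (q i * c i) * y t i ≤ (q i * δ' i + (q i - 1) * ω i) * y t i :=
      mul_le_mul_of_nonneg_right hqc hyn
    show _ ≤ (1 - c i) * (x t i + q i * y t i) + e i * s i * (B *ᵥ v t) i
    nlinarith [h1, t1, t2]
  -- monotonicity of mulVec by M
  have hMmono : ∀ (a b : Fin n → ℝ), (∀ j, a j ≤ b j) → ∀ i, (M *ᵥ a) i ≤ (M *ᵥ b) i := by
    intro a b hab i
    simp only [Matrix.mulVec, dotProduct]
    exact Finset.sum_le_sum fun j _ => mul_le_mul_of_nonneg_left (hab j) (hM_nonneg i j)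
  -- iterate
  have hvb : ∀ t i, v t i ≤ ((M ^ t) *ᵥ v 0) i := by
    intro t
    induction t with
    | zero => intro i; rw [pow_zero, Matrix.one_mulVec]
    | succ t ih =>
      intro i
      calc v (t + 1) i ≤ (M *ᵥ v t) i := hstep t i
        _ ≤ (M *ᵥ ((M ^ t) *ᵥ v 0)) i := hMmono _ _ ih i
        _ = ((M ^ (t + 1)) *ᵥ v 0) i := by
            rw [Matrix.mulVec_mulVec, ← pow_succ']
  -- the bound tends to zero
  have hbound : ∀ i, Tendsto (fun t => ((M ^ t) *ᵥ v 0) i) atTop (nhds 0) := by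
    intro i
    have : ∀ t, ((M ^ t) *ᵥ v 0) i = ∑ j, (M ^ t) i j * v 0 j := by
      intro t; simp [Matrix.mulVec, dotProduct]
    simp only [this]
    have h0 : (0 : ℝ) = ∑ _j : Fin n, 0 := by simp
    rw [h0]
    exact tendsto_finset_sum _ fun j _ => by
      simpa using (pow_entry_tendsto_zero M hρ i j).mul_const (v 0 j)
  constructor
  · rw [tendsto_pi_nhds]
    intro i
    refine tendsto_of_tendsto_of_tendsto_of_le_of_le tendsto_const_nhds
      (by simpa using hbound i) (fun t => hx t i) (fun t => (hxv t i).trans (hvb t i))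
  · rw [tendsto_pi_nhds]
    intro i
    have hqi := (hq01 i).1
    have hub : ∀ t, y t i ≤ ((M ^ t) *ᵥ v 0) i / q i := by
      intro t
      rw [le_div_iff₀ hqi]
      have : y t i * q i ≤ v t i := by
        have := hx t i; simp only [hv]; nlinarith
      exact this.trans (hvb t i)
    refine tendsto_of_tendsto_of_tendsto_of_le_of_le tendsto_const_nhds
      ?_ (fun t => hy t i) hub
    simpa using (hbound i).div_const (q i)
end

section
/- For every q ∈ (0,1]ⁿ and every t ≥ 0, the SDIR trajectories satisfy the entrywise inequality x(t+1) + Q·y(t+1) ≤ M(q)·(x(t) + Q·y(t)), where Q = diag(q) and M(q) = I − C(q) + (A + Q(I − A))·S0·B. (Key one-step comparison inequality from the proof of Theorem 1.) -/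
open Matrix Filter Finset

/-- One-step comparison inequality from the proof of Theorem 1:
`x(t+1) + Q·y(t+1) ≤ M(q)·(x(t) + Q·y(t))` entrywise. -/
theorem sdir_one_step_comparison
    (n : ℕ) (hn : 1 ≤ n) (α ω δ δ' s : Fin n → ℝ)
    (hα : ∀ i, 0 ≤ α i ∧ α i ≤ 1) (hω : ∀ i, 0 ≤ ω i ∧ ω i ≤ 1)
    (hδ : ∀ i, 0 ≤ δ i ∧ δ i ≤ 1) (hδ' : ∀ i, 0 ≤ δ' i ∧ δ' i ≤ 1)
    (hs : ∀ i, 0 ≤ s i ∧ s i ≤ 1) (hωδ' : ∀ i, ω i + δ' i ≤ 1)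
    (B : Matrix (Fin n) (Fin n) ℝ) (hB : ∀ i j, 0 ≤ B i j)
    (x y : ℕ → Fin n → ℝ)
    (hx : ∀ t i, 0 ≤ x t i) (hy : ∀ t i, 0 ≤ y t i)
    (hdynx : ∀ t, x (t + 1) =
      (1 - Matrix.diagonal δ + Matrix.diagonal α * Matrix.diagonal s * B) *ᵥ x t +
        Matrix.diagonal ω *ᵥ y t)
    (hdyny : ∀ t, y (t + 1) =
      ((1 - Matrix.diagonal α) * Matrix.diagonal s * B) *ᵥ x t +
        (1 - Matrix.diagonal ω - Matrix.diagonal δ') *ᵥ y t)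
    (q : Fin n → ℝ) (hq : ∀ i, 0 < q i ∧ q i ≤ 1) (t : ℕ) :
    x (t + 1) + Matrix.diagonal q *ᵥ y (t + 1) ≤
      (1 - Matrix.diagonal (fun i => min (δ i) (δ' i + (1 - 1 / q i) * ω i)) +
        (Matrix.diagonal α + Matrix.diagonal q * (1 - Matrix.diagonal α)) *
          Matrix.diagonal s * B) *ᵥ (x t + Matrix.diagonal q *ᵥ y t) := by
  intro i
  have hq0 := (hq i).1
  have hq1 := (hq i).2
  have hqne : q i ≠ 0 := ne_of_gt hq0
  set z : Fin n → ℝ := x t + Matrix.diagonal q *ᵥ y t with hz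
  have hBx : (B *ᵥ x t) i ≤ (B *ᵥ z) i := by
    simp only [Matrix.mulVec, dotProduct]
    apply Finset.sum_le_sum
    intro k _
    have h1 : 0 ≤ (Matrix.diagonal q *ᵥ y t) k := by
      rw [Matrix.mulVec_diagonal]
      exact mul_nonneg (le_of_lt (hq k).1) (hy t k)
    have : x t k ≤ z k := by
      simp only [hz, Pi.add_apply]; linarith
    exact mul_le_mul_of_nonneg_left this (hB i k)
  have hzx : z i = x t i + q i * y t i := by
    simp [hz, Matrix.mulVec_diagonal]
  have hrw : ∀ (d w : Fin n → ℝ) (v : Fin n → ℝ) (M : Matrix (Fin n) (Fin n) ℝ),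
      ((Matrix.diagonal d * Matrix.diagonal w * M) *ᵥ v) i
        = d i * (w i * (M *ᵥ v) i) := by
    intro d w v M
    rw [← Matrix.mulVec_mulVec, ← Matrix.mulVec_mulVec, Matrix.mulVec_diagonal,
      Matrix.mulVec_diagonal]
  -- unfold the dynamics and reduce everything to scalars
  rw [hdynx t, hdyny t]
  simp only [Pi.add_apply, Matrix.add_mulVec, Matrix.sub_mulVec, Matrix.one_mulVec,
    Matrix.mulVec_diagonal, Pi.sub_apply]
  rw [hrw α s (x t) B]
  have hrw2 : (((1 - Matrix.diagonal α) * Matrix.diagonal s * B) *ᵥ x t) i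
      = (1 - α i) * (s i * (B *ᵥ x t) i) := by
    have : (1 : Matrix (Fin n) (Fin n) ℝ) - Matrix.diagonal α
        = Matrix.diagonal (fun j => 1 - α j) := by
      rw [← Matrix.diagonal_one, Matrix.diagonal_sub]
    rw [this, hrw]
  rw [hrw2]
  have hrw3 : (((Matrix.diagonal α + Matrix.diagonal q * (1 - Matrix.diagonal α)) *
      Matrix.diagonal s * B) *ᵥ z) i = (α i + q i * (1 - α i)) * (s i * (B *ᵥ z) i) := by
    have h1 : (1 : Matrix (Fin n) (Fin n) ℝ) - Matrix.diagonal α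
        = Matrix.diagonal (fun j => 1 - α j) := by
      rw [← Matrix.diagonal_one, Matrix.diagonal_sub]
    have h2 : Matrix.diagonal α + Matrix.diagonal q * (1 - Matrix.diagonal α)
        = Matrix.diagonal (fun j => α j + q j * (1 - α j)) := by
      rw [h1, Matrix.diagonal_mul_diagonal, ← Matrix.diagonal_add]
    rw [h2, ← Matrix.mulVec_mulVec, ← Matrix.mulVec_mulVec, Matrix.mulVec_diagonal,
      Matrix.mulVec_diagonal]
  rw [hrw3, hzx]
  -- now a scalar inequality
  set c : ℝ := min (δ i) (δ' i + (1 - 1 / q i) * ω i) with hc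
  have hc1 : c ≤ δ i := min_le_left _ _
  have hc2 : c ≤ δ' i + (1 - 1 / q i) * ω i := min_le_right _ _
  have hcq : q i * c ≤ q i * δ' i + (q i - 1) * ω i := by
    have h := mul_le_mul_of_nonneg_left hc2 (le_of_lt hq0)
    have hexp : q i * (δ' i + (1 - 1 / q i) * ω i) = q i * δ' i + (q i - 1) * ω i := by
      field_simp
    linarith [h, hexp.le, hexp.ge]
  have hXc : 0 ≤ (δ i - c) * x t i := mul_nonneg (by linarith) (hx t i)
  have hYc : 0 ≤ (q i * δ' i + (q i - 1) * ω i - q i * c) * y t i :=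
    mul_nonneg (by linarith) (hy t i)
  have hcoef : 0 ≤ α i + q i * (1 - α i) :=
    add_nonneg (hα i).1 (mul_nonneg (le_of_lt hq0) (by linarith [(hα i).2]))
  have hprod : 0 ≤ (α i + q i * (1 - α i)) * (s i * ((B *ᵥ z) i - (B *ᵥ x t) i)) :=
    mul_nonneg hcoef (mul_nonneg (hs i).1 (by linarith))
  nlinarith [hXc, hYc, hprod]
end

section
/- For every q ∈ (0,1]ⁿ and every t ≥ 0, the SDIR trajectories satisfy the entrywise inequality x(t) + Q·y(t) ≤ M(q)ᵗ·(x(0) + Q·y(0)), where Q = diag(q) and M(q) = I − C(q) + (A + Q(I − A))·S0·B. (Iterated comparison bound from the proof of Theorem 1.) -/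
open Matrix Filter Finset

/-- Monotonicity of multiplication by an entrywise nonnegative matrix. -/
lemma mulVec_mono_of_nonneg {n : ℕ} {M : Matrix (Fin n) (Fin n) ℝ}
    (hM : ∀ i j, 0 ≤ M i j) {u v : Fin n → ℝ} (h : u ≤ v) :
    M *ᵥ u ≤ M *ᵥ v := by
  intro i
  simp only [Matrix.mulVec, dotProduct]
  exact Finset.sum_le_sum fun j _ => mul_le_mul_of_nonneg_left (h j) (hM i j)

/-- Powers of an entrywise nonnegative matrix are entrywise nonnegative. -/
lemma pow_entry_nonneg {n : ℕ} {M : Matrix (Fin n) (Fin n) ℝ}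
    (hM : ∀ i j, 0 ≤ M i j) (t : ℕ) : ∀ i j, 0 ≤ (M ^ t) i j := by
  induction t with
  | zero =>
    intro i j
    simp only [pow_zero, Matrix.one_apply]
    split <;> norm_num
  | succ t ih =>
    intro i j
    rw [pow_succ, Matrix.mul_apply]
    exact Finset.sum_nonneg fun k _ => mul_nonneg (ih i k) (hM k j)

/-- Iterated comparison bound from the proof of Theorem 1:
`x(t) + Q·y(t) ≤ M(q)ᵗ·(x(0) + Q·y(0))` entrywise. -/
theorem sdir_iterated_comparison
    (n : ℕ) (hn : 1 ≤ n) (α ω δ δ' s : Fin n → ℝ)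
    (hα : ∀ i, 0 ≤ α i ∧ α i ≤ 1) (hω : ∀ i, 0 ≤ ω i ∧ ω i ≤ 1)
    (hδ : ∀ i, 0 ≤ δ i ∧ δ i ≤ 1) (hδ' : ∀ i, 0 ≤ δ' i ∧ δ' i ≤ 1)
    (hs : ∀ i, 0 ≤ s i ∧ s i ≤ 1) (hωδ' : ∀ i, ω i + δ' i ≤ 1)
    (B : Matrix (Fin n) (Fin n) ℝ) (hB : ∀ i j, 0 ≤ B i j)
    (x y : ℕ → Fin n → ℝ)
    (hx : ∀ t i, 0 ≤ x t i) (hy : ∀ t i, 0 ≤ y t i)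
    (hdynx : ∀ t, x (t + 1) =
      (1 - Matrix.diagonal δ + Matrix.diagonal α * Matrix.diagonal s * B) *ᵥ x t +
        Matrix.diagonal ω *ᵥ y t)
    (hdyny : ∀ t, y (t + 1) =
      ((1 - Matrix.diagonal α) * Matrix.diagonal s * B) *ᵥ x t +
        (1 - Matrix.diagonal ω - Matrix.diagonal δ') *ᵥ y t)
    (q : Fin n → ℝ) (hq : ∀ i, 0 < q i ∧ q i ≤ 1) (t : ℕ) :
    x t + Matrix.diagonal q *ᵥ y t ≤
      (1 - Matrix.diagonal (fun i => min (δ i) (δ' i + (1 - 1 / q i) * ω i)) +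
        (Matrix.diagonal α + Matrix.diagonal q * (1 - Matrix.diagonal α)) *
          Matrix.diagonal s * B) ^ t *ᵥ (x 0 + Matrix.diagonal q *ᵥ y 0) := by
  set c : Fin n → ℝ := fun i => min (δ i) (δ' i + (1 - 1 / q i) * ω i) with hc
  set k : Fin n → ℝ := fun i => (α i + q i * (1 - α i)) * s i with hk
  set M : Matrix (Fin n) (Fin n) ℝ :=
    1 - Matrix.diagonal c +
      (Matrix.diagonal α + Matrix.diagonal q * (1 - Matrix.diagonal α)) *
        Matrix.diagonal s * B with hM
  -- entries of M
  have hMij : ∀ i j, M i j = (if i = j then 1 - c i else 0) + k i * B i j := by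
    intro i j
    have h1 : (Matrix.diagonal α + Matrix.diagonal q * (1 - Matrix.diagonal α)) *
        Matrix.diagonal s = Matrix.diagonal (fun i => (α i + q i * (1 - α i)) * s i) := by
      rw [← Matrix.diagonal_one]
      ext a b
      by_cases h : a = b <;>
        simp [Matrix.diagonal_apply, Matrix.mul_apply, Matrix.add_apply, Matrix.sub_apply,
          Finset.sum_ite_eq, h, Finset.mul_sum]
    rw [hM, h1]
    by_cases h : i = j <;>
      simp [Matrix.add_apply, Matrix.sub_apply, Matrix.one_apply, Matrix.diagonal_apply,
        Matrix.diagonal_mul, h, hk]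
  have hcδ : ∀ i, c i ≤ δ i := fun i => min_le_left _ _
  have hknn : ∀ i, 0 ≤ k i := fun i =>
    mul_nonneg (by nlinarith [(hα i).1, (hα i).2, (hq i).1, (hq i).2]) (hs i).1
  have hMnn : ∀ i j, 0 ≤ M i j := by
    intro i j
    rw [hMij]
    have h1 : 0 ≤ (if i = j then 1 - c i else 0) := by
      split
      · nlinarith [hcδ i, (hδ i).2]
      · exact le_rfl
    exact add_nonneg h1 (mul_nonneg (hknn i) (hB i j))
  -- action of M on a vector
  have hMv : ∀ (v : Fin n → ℝ) i, (M *ᵥ v) i = (1 - c i) * v i + k i * (B *ᵥ v) i := by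
    intro v i
    simp only [Matrix.mulVec, dotProduct, hMij, add_mul, ite_mul, zero_mul,
      Finset.sum_add_distrib, Finset.sum_ite_eq, Finset.mem_univ, if_true, mul_assoc,
      Finset.mul_sum]
  -- one-step comparison
  have step : ∀ t, x (t + 1) + Matrix.diagonal q *ᵥ y (t + 1) ≤
      M *ᵥ (x t + Matrix.diagonal q *ᵥ y t) := by
    intro t i
    have hqi := (hq i).1
    have hBx : (B *ᵥ x t) i ≤ (B *ᵥ (x t + Matrix.diagonal q *ᵥ y t)) i := by
      refine mulVec_mono_of_nonneg hB ?_ i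
      intro j
      have : 0 ≤ (Matrix.diagonal q *ᵥ y t) j := by
        rw [Matrix.mulVec_diagonal]
        exact mul_nonneg (hq j).1.le (hy t j)
      simp only [Pi.add_apply]
      linarith
    have hqc : q i * c i ≤ q i * δ' i + (q i - 1) * ω i := by
      have h2 : c i ≤ δ' i + (1 - 1 / q i) * ω i := min_le_right _ _
      have h4 : q i * (δ' i + (1 - 1 / q i) * ω i) = q i * δ' i + (q i - 1) * ω i := by
        field_simp
      calc q i * c i ≤ q i * (δ' i + (1 - 1 / q i) * ω i) :=
              mul_le_mul_of_nonneg_left h2 hqi.le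
        _ = q i * δ' i + (q i - 1) * ω i := h4
    rw [hdynx, hdyny]
    simp only [Pi.add_apply, Matrix.add_mulVec, Matrix.sub_mulVec, Matrix.one_mulVec,
      ← Matrix.mulVec_mulVec, Matrix.mulVec_diagonal, Pi.sub_apply, hMv, Pi.add_apply,
      Matrix.mulVec_diagonal]
    have key : 0 ≤ k i * ((B *ᵥ (x t + Matrix.diagonal q *ᵥ y t)) i - (B *ᵥ x t) i) :=
      mul_nonneg (hknn i) (sub_nonneg.2 hBx)
    have hxi := hx t i
    have hyi := hy t i
    have hcd := hcδ i
    simp only [hk] at key ⊢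
    nlinarith [mul_nonneg (sub_nonneg.2 hcd) hxi,
      mul_nonneg (sub_nonneg.2 hqc) hyi, key]
  -- induction
  induction t with
  | zero => simp
  | succ t ih =>
    calc x (t + 1) + Matrix.diagonal q *ᵥ y (t + 1)
        ≤ M *ᵥ (x t + Matrix.diagonal q *ᵥ y t) := step t
      _ ≤ M *ᵥ (M ^ t *ᵥ (x 0 + Matrix.diagonal q *ᵥ y 0)) :=
          mulVec_mono_of_nonneg hMnn ih
      _ = M ^ (t + 1) *ᵥ (x 0 + Matrix.diagonal q *ᵥ y 0) := by
          rw [Matrix.mulVec_mulVec, ← pow_succ']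
end

section
/- Let P ⊆ {1,…,n}×{1,…,n} and let q ∈ (0,1]ⁿ satisfy δ_i ≤ δ'_i + (1 − 1/q_i)·ω_i for every i. If ρ(M_{−P}(q)) < 1, then for the SDIR dynamics run with B replaced by B_{−P}, the infection amount satisfies sup_{t≥0} ‖m(t) − m(0)‖₁ ≤ σ^U(P) = 1ᵀ·(A + Q(I − A))^{−1}·(D·(I − M_{−P}(q))^{−1} − I)·(x(0) + Q·y(0)). (Theorem 2: supermodular upper bound on the infection amount after deleting the edge set P.) -/
open Matrix Filter Finset

/-- The matrix `B` with the entries indexed by the edge set `P` deleted (set to `0`). -/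
def Bdel {n : ℕ} (B : Matrix (Fin n) (Fin n) ℝ) (P : Finset (Fin n × Fin n)) :
    Matrix (Fin n) (Fin n) ℝ :=
  Matrix.of fun i j => if (i, j) ∈ P then 0 else B i j

section Analytic
attribute [local instance] Matrix.linftyOpNormedRing Matrix.linftyOpNormedAlgebra

variable {n : ℕ}

local instance : CompleteSpace (Matrix (Fin n) (Fin n) ℂ) :=
  FiniteDimensional.complete ℂ (Matrix (Fin n) (Fin n) ℂ)

lemma entry_nnnorm_le (A : Matrix (Fin n) (Fin n) ℂ) (i j : Fin n) : ‖A i j‖₊ ≤ ‖A‖₊ := by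
  rw [Matrix.linfty_opNNNorm_def]
  exact le_trans (Finset.single_le_sum (f := fun j => ‖A i j‖₊) (fun _ _ => zero_le)
    (Finset.mem_univ j)) (Finset.le_sup (f := fun i => ∑ j, ‖A i j‖₊) (Finset.mem_univ i))

lemma specRad_key (M : Matrix (Fin n) (Fin n) ℝ) (hρ : specRad M < 1) :
    IsUnit (1 - M).det ∧ ∀ i j, Tendsto (fun k => (M ^ k) i j) atTop (nhds 0) := by
  set Mc : Matrix (Fin n) (Fin n) ℂ := M.map Complex.ofReal with hMc
  have hmap : Mc = Complex.ofRealHom.mapMatrix M := rfl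
  have hfin : {r : ℝ | ∃ μ : ℂ, μ ∈ spectrum ℂ Mc ∧ r = ‖μ‖}.Finite := by
    have : {r : ℝ | ∃ μ : ℂ, μ ∈ spectrum ℂ Mc ∧ r = ‖μ‖}
        = (fun μ : ℂ => ‖μ‖) '' spectrum ℂ Mc := by
      ext r; simp [Set.mem_image, eq_comm]
    rw [this]
    exact (Matrix.finite_spectrum Mc).image _
  have hbdd : BddAbove {r : ℝ | ∃ μ : ℂ, μ ∈ spectrum ℂ Mc ∧ r = ‖μ‖} :=
    hfin.bddAbove
  have hspec : ∀ μ ∈ spectrum ℂ Mc, ‖μ‖ ≤ specRad M := fun μ h =>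
    le_csSup hbdd ⟨μ, h, rfl⟩
  -- invertibility
  have h1 : (1 : ℂ) ∉ spectrum ℂ Mc := by
    intro h
    exact absurd (le_trans (by simp) (hspec 1 h)) (not_le.mpr hρ)
  have hUc : IsUnit ((1 : Matrix (Fin n) (Fin n) ℂ) - Mc) := by
    simpa using spectrum.notMem_iff.mp h1
  have hdetc : IsUnit ((1 : Matrix (Fin n) (Fin n) ℂ) - Mc).det :=
    (Matrix.isUnit_iff_isUnit_det _).mp hUc
  have hdet : IsUnit (1 - M).det := by
    have hh : ((1 : Matrix (Fin n) (Fin n) ℂ) - Mc) = Complex.ofRealHom.mapMatrix (1 - M) := by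
      ext i j
      by_cases h : i = j <;>
        simp [hmap, RingHom.mapMatrix_apply, Matrix.map_apply, Matrix.sub_apply,
          Matrix.one_apply, h]
    rw [hh, ← RingHom.map_det] at hdetc
    rw [isUnit_iff_ne_zero]
    intro h0
    rw [h0] at hdetc
    simp at hdetc
  refine ⟨hdet, ?_⟩
  -- spectral radius over ℂ < 1
  have hsr : spectralRadius ℂ Mc < 1 := by
    rw [spectralRadius]
    have : ⨆ μ ∈ spectrum ℂ Mc, (‖μ‖₊ : ENNReal) ≤ ENNReal.ofReal (specRad M) := by
      refine iSup₂_le fun μ hμ => ?_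
      have := hspec μ hμ
      calc (‖μ‖₊ : ENNReal) = ENNReal.ofReal ‖μ‖ := (ofReal_norm μ).symm
        _ ≤ ENNReal.ofReal (specRad M) := ENNReal.ofReal_le_ofReal this
    calc ⨆ μ ∈ spectrum ℂ Mc, (‖μ‖₊ : ENNReal) ≤ ENNReal.ofReal (specRad M) := this
      _ < 1 := by rw [ENNReal.ofReal_lt_one]; exact hρ
  -- Gelfand
  have hG := spectrum.pow_nnnorm_pow_one_div_tendsto_nhds_spectralRadius Mc
  obtain ⟨c, hc1, hc2⟩ := ENNReal.lt_iff_exists_nnreal_btwn.mp hsr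
  have hev : ∀ᶠ k : ℕ in atTop, (‖Mc ^ k‖₊ : ENNReal) ^ (1 / (k : ℝ)) < (c : ENNReal) :=
    hG.eventually_lt_const hc1
  have hcr : (c : ℝ) < 1 := by exact_mod_cast hc2
  have hbound : ∀ᶠ k : ℕ in atTop, ∀ i j, |(M ^ k) i j| ≤ (c : ℝ) ^ k := by
    filter_upwards [hev, eventually_ge_atTop 1] with k hk hk1 i j
    have hkne : (k : ℝ) ≠ 0 := Nat.cast_ne_zero.mpr (by omega)
    have h2 : (‖Mc ^ k‖₊ : ENNReal) ≤ (c : ENNReal) ^ (k : ℝ) := by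
      have h := ENNReal.rpow_le_rpow hk.le (by positivity : (0:ℝ) ≤ (k:ℝ))
      rwa [← ENNReal.rpow_mul, one_div, inv_mul_cancel₀ hkne, ENNReal.rpow_one] at h
    have h3 : ‖Mc ^ k‖₊ ≤ c ^ k := by
      rw [ENNReal.rpow_natCast] at h2
      exact_mod_cast h2
    have h4 : ‖(Mc ^ k) i j‖₊ ≤ c ^ k := le_trans (entry_nnnorm_le _ i j) h3
    have h5 : (Mc ^ k) i j = ((M ^ k) i j : ℂ) := by
      rw [hmap, ← map_pow]; rfl
    calc |(M ^ k) i j| = ‖(Mc ^ k) i j‖ := by rw [h5]; simp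
      _ ≤ (c : ℝ) ^ k := by exact_mod_cast h4
  intro i j
  have hc0 : Tendsto (fun k : ℕ => (c : ℝ) ^ k) atTop (nhds 0) :=
    tendsto_pow_atTop_nhds_zero_of_lt_one c.coe_nonneg hcr
  have hc0' : Tendsto (fun k : ℕ => -((c : ℝ) ^ k)) atTop (nhds 0) := by
    simpa using hc0.neg
  refine tendsto_of_tendsto_of_tendsto_of_le_of_le' hc0' hc0 ?_ ?_
  · filter_upwards [hbound] with k hk
    have := hk i j; rw [abs_le] at this; linarith [this.1]
  · filter_upwards [hbound] with k hk
    have := hk i j; rw [abs_le] at this; exact this.2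
end Analytic

lemma geom_bound {n : ℕ} (M : Matrix (Fin n) (Fin n) ℝ)
    (hM : ∀ i j, 0 ≤ M i j) (hρ : specRad M < 1) :
    IsUnit (1 - M).det ∧ (∀ i j, 0 ≤ (1 - M)⁻¹ i j) ∧
      ∀ t i j, (∑ u ∈ Finset.range t, M ^ u) i j ≤ (1 - M)⁻¹ i j := by
  obtain ⟨hdet, htend⟩ := specRad_key M hρ
  have hpow : ∀ k i j, 0 ≤ (M ^ k) i j := by
    intro k
    induction k with
    | zero => intro i j; by_cases h : i = j <;> simp [pow_zero, Matrix.one_apply, h]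
    | succ k ih =>
        intro i j
        rw [pow_succ, Matrix.mul_apply]
        exact Finset.sum_nonneg fun l _ => mul_nonneg (ih i l) (hM l j)
  have hid : ∀ t, (1 - M)⁻¹ =
      (∑ u ∈ Finset.range t, M ^ u) + (1 - M)⁻¹ * M ^ t := by
    intro t
    have h1 : (1 - M) * (∑ u ∈ Finset.range t, M ^ u) = 1 - M ^ t := by
      have h := mul_geom_sum M t
      calc (1 - M) * (∑ u ∈ Finset.range t, M ^ u)
          = -((M - 1) * ∑ u ∈ Finset.range t, M ^ u) := by noncomm_ring
        _ = -(M ^ t - 1) := by rw [h]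
        _ = 1 - M ^ t := by noncomm_ring
    have h2 : (1 - M) * (∑ u ∈ Finset.range t, M ^ u) + M ^ t = 1 := by
      rw [h1]; abel
    calc (1 - M)⁻¹ = (1 - M)⁻¹ * ((1 - M) * (∑ u ∈ Finset.range t, M ^ u) + M ^ t) := by
          rw [h2, mul_one]
      _ = ((1 - M)⁻¹ * (1 - M)) * (∑ u ∈ Finset.range t, M ^ u) + (1 - M)⁻¹ * M ^ t := by
          noncomm_ring
      _ = (∑ u ∈ Finset.range t, M ^ u) + (1 - M)⁻¹ * M ^ t := by
          rw [Matrix.nonsing_inv_mul _ hdet, one_mul]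
  have hNM : ∀ i j, Tendsto (fun t => ((1 - M)⁻¹ * M ^ t) i j) atTop (nhds 0) := by
    intro i j
    have : ∀ t, ((1 - M)⁻¹ * M ^ t) i j = ∑ l, (1 - M)⁻¹ i l * (M ^ t) l j := by
      intro t; rw [Matrix.mul_apply]
    simp only [this]
    have h0 : (0 : ℝ) = ∑ l : Fin n, (1 - M)⁻¹ i l * 0 := by simp
    rw [h0]
    exact tendsto_finset_sum _ fun l _ => (htend l j).const_mul _
  have hSentry : ∀ t i j, 0 ≤ (∑ u ∈ Finset.range t, M ^ u) i j := by
    intro t i j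
    rw [Matrix.sum_apply]
    exact Finset.sum_nonneg fun u _ => hpow u i j
  have hNnn : ∀ i j, 0 ≤ (1 - M)⁻¹ i j := by
    intro i j
    refine le_of_tendsto (hNM i j) (Eventually.of_forall fun t => ?_)
    have h := congrFun (congrFun (hid t) i) j
    simp only [Matrix.add_apply] at h
    have := hSentry t i j
    linarith
  refine ⟨hdet, hNnn, fun t i j => ?_⟩
  have h := congrFun (congrFun (hid t) i) j
  simp only [Matrix.add_apply] at h
  have h2 : 0 ≤ ((1 - M)⁻¹ * M ^ t) i j := by
    rw [Matrix.mul_apply]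
    exact Finset.sum_nonneg fun l _ => mul_nonneg (hNnn i l) (hpow t l j)
  linarith

lemma mv_mono {n : ℕ} (K : Matrix (Fin n) (Fin n) ℝ) (hK : ∀ i j, 0 ≤ K i j)
    {a b : Fin n → ℝ} (h : ∀ j, a j ≤ b j) (i : Fin n) : (K *ᵥ a) i ≤ (K *ᵥ b) i := by
  simp only [Matrix.mulVec, dotProduct]
  exact Finset.sum_le_sum fun j _ => mul_le_mul_of_nonneg_left (h j) (hK i j)

lemma dmv {n : ℕ} (d : Fin n → ℝ) (K : Matrix (Fin n) (Fin n) ℝ) (v : Fin n → ℝ) (i : Fin n) :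
    ((Matrix.diagonal d * K) *ᵥ v) i = d i * (K *ᵥ v) i := by
  simp only [Matrix.mulVec, dotProduct, Matrix.diagonal_mul, Finset.mul_sum, mul_assoc]

/-- Theorem 2: supermodular upper bound on the infection amount after deleting
the edge set `P`:  `sup_t ‖m(t) − m(0)‖₁ ≤ σᵁ(P)`. -/
theorem sdir_upper_bound
    (n : ℕ) (hn : 1 ≤ n) (α ω δ δ' s : Fin n → ℝ)
    (hα : ∀ i, 0 ≤ α i ∧ α i ≤ 1) (hω : ∀ i, 0 ≤ ω i ∧ ω i ≤ 1)
    (hδ : ∀ i, 0 ≤ δ i ∧ δ i ≤ 1) (hδ' : ∀ i, 0 ≤ δ' i ∧ δ' i ≤ 1)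
    (hs : ∀ i, 0 ≤ s i ∧ s i ≤ 1) (hωδ' : ∀ i, ω i + δ' i ≤ 1)
    (B : Matrix (Fin n) (Fin n) ℝ) (hB : ∀ i j, 0 ≤ B i j)
    (P : Finset (Fin n × Fin n))
    (q : Fin n → ℝ) (hq : ∀ i, 0 < q i ∧ q i ≤ 1)
    (hqδ : ∀ i, δ i ≤ δ' i + (1 - 1 / q i) * ω i)
    (hρ : specRad
      (1 - Matrix.diagonal (fun i => min (δ i) (δ' i + (1 - 1 / q i) * ω i)) +
        (Matrix.diagonal α + Matrix.diagonal q * (1 - Matrix.diagonal α)) *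
          Matrix.diagonal s * Bdel B P) < 1)
    (x y r : ℕ → Fin n → ℝ)
    (hx : ∀ t i, 0 ≤ x t i) (hy : ∀ t i, 0 ≤ y t i) (hr : ∀ t i, 0 ≤ r t i)
    (hdynx : ∀ t, x (t + 1) =
      (1 - Matrix.diagonal δ + Matrix.diagonal α * Matrix.diagonal s * Bdel B P) *ᵥ x t +
        Matrix.diagonal ω *ᵥ y t)
    (hdyny : ∀ t, y (t + 1) =
      ((1 - Matrix.diagonal α) * Matrix.diagonal s * Bdel B P) *ᵥ x t +
        (1 - Matrix.diagonal ω - Matrix.diagonal δ') *ᵥ y t)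
    (hdynr : ∀ t, r (t + 1) =
      Matrix.diagonal δ *ᵥ x t + Matrix.diagonal δ' *ᵥ y t + r t)
    (m : ℕ → Fin n → ℝ) (hm : ∀ t, m t = x t + y t + r t) :
    ∀ t, ∑ i, |m t i - m 0 i| ≤
      (fun _ => (1 : ℝ)) ⬝ᵥ
        ((Matrix.diagonal α + Matrix.diagonal q * (1 - Matrix.diagonal α))⁻¹ *
          (Matrix.diagonal δ *
            (1 - (1 - Matrix.diagonal (fun i => min (δ i) (δ' i + (1 - 1 / q i) * ω i)) +
              (Matrix.diagonal α + Matrix.diagonal q * (1 - Matrix.diagonal α)) *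
                Matrix.diagonal s * Bdel B P))⁻¹ - 1)) *ᵥ
          (x 0 + Matrix.diagonal q *ᵥ y 0) := by
  intro t
  -- basic simplifications
  have hCδ : (fun i => min (δ i) (δ' i + (1 - 1 / q i) * ω i)) = δ :=
    funext fun i => min_eq_left (hqδ i)
  set g : Fin n → ℝ := fun i => α i + q i * (1 - α i) with hg
  have hG : Matrix.diagonal α + Matrix.diagonal q * (1 - Matrix.diagonal α)
      = Matrix.diagonal g := by
    rw [← Matrix.diagonal_one, Matrix.diagonal_sub, Matrix.diagonal_mul_diagonal,
      Matrix.diagonal_add]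
  rw [hCδ, hG] at hρ ⊢
  set Bp : Matrix (Fin n) (Fin n) ℝ := Bdel B P with hBpdef
  have hBp : ∀ i j, 0 ≤ Bp i j := by
    intro i j
    rw [hBpdef]
    show (0:ℝ) ≤ if (i, j) ∈ P then 0 else B i j
    split <;> [exact le_rfl; exact hB i j]
  set M : Matrix (Fin n) (Fin n) ℝ :=
    1 - Matrix.diagonal δ + Matrix.diagonal g * Matrix.diagonal s * Bp with hMdef
  have hg0 : ∀ i, 0 < g i := by
    intro i
    have h1 := (hq i).1; have h2 := (hq i).2; have h3 := (hα i).1; have h4 := (hα i).2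
    show 0 < α i + q i * (1 - α i)
    nlinarith
  have hMentry : ∀ i j, M i j = (if i = j then 1 - δ i else 0) + g i * s i * Bp i j := by
    intro i j
    rw [hMdef]
    simp only [Matrix.add_apply, Matrix.sub_apply, Matrix.one_apply, Matrix.diagonal_apply,
      Matrix.diagonal_mul_diagonal, Matrix.diagonal_mul]
    by_cases h : i = j <;> simp [h]
  have hM0 : ∀ i j, 0 ≤ M i j := by
    intro i j
    rw [hMentry]
    have := (hδ i).2
    have := mul_nonneg (mul_nonneg (hg0 i).le (hs i).1) (hBp i j)
    split <;> linarith
  obtain ⟨hMdet, hNnn, hSle⟩ := geom_bound M hM0 hρ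
  -- the vector z
  set z : ℕ → Fin n → ℝ := fun u i => x u i + q i * y u i with hz
  have hz0 : ∀ u i, 0 ≤ z u i := fun u i =>
    add_nonneg (hx u i) (mul_nonneg (hq i).1.le (hy u i))
  have hxz : ∀ u i, x u i ≤ z u i := fun u i => by
    have := mul_nonneg (hq i).1.le (hy u i); rw [hz]; dsimp; linarith
  -- entrywise dynamics
  have hxe : ∀ u i, x (u + 1) i =
      x u i - δ i * x u i + α i * s i * (Bp *ᵥ x u) i + ω i * y u i := by
    intro u i
    have h := congrFun (hdynx u) i
    rw [h]
    have e1 : Matrix.diagonal α * Matrix.diagonal s * Bp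
        = Matrix.diagonal (fun i => α i * s i) * Bp := by
      rw [Matrix.diagonal_mul_diagonal]
    simp only [Pi.add_apply, Matrix.add_mulVec, Matrix.sub_mulVec, Matrix.one_mulVec, e1,
      Matrix.mulVec_diagonal, dmv, Pi.sub_apply]
    try ring
  have hye : ∀ u i, y (u + 1) i =
      (1 - α i) * s i * (Bp *ᵥ x u) i + (1 - ω i - δ' i) * y u i := by
    intro u i
    have h := congrFun (hdyny u) i
    rw [h]
    have e2 : (1 - Matrix.diagonal α) * Matrix.diagonal s * Bp
        = Matrix.diagonal (fun i => (1 - α i) * s i) * Bp := by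
      rw [← Matrix.diagonal_one, Matrix.diagonal_sub, Matrix.diagonal_mul_diagonal]
    have e3 : (1 : Matrix (Fin n) (Fin n) ℝ) - Matrix.diagonal ω - Matrix.diagonal δ'
        = Matrix.diagonal (fun i => 1 - ω i - δ' i) := by
      rw [← Matrix.diagonal_one, Matrix.diagonal_sub, Matrix.diagonal_sub]
    simp only [Pi.add_apply, e2, e3, Matrix.mulVec_diagonal, dmv]
  have hre : ∀ u i, r (u + 1) i = δ i * x u i + δ' i * y u i + r u i := by
    intro u i
    have h := congrFun (hdynr u) i
    rw [h]
    simp only [Pi.add_apply, Matrix.mulVec_diagonal]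
  -- step identity for m
  have hstep : ∀ u i, m (u + 1) i = m u i + s i * (Bp *ᵥ x u) i := by
    intro u i
    rw [hm, hm]
    simp only [Pi.add_apply]
    rw [hxe u i, hye u i, hre u i]
    ring
  have hsum : ∀ T i, m T i = m 0 i + ∑ u ∈ Finset.range T, s i * (Bp *ᵥ x u) i := by
    intro T i
    induction T with
    | zero => simp
    | succ T ih => rw [hstep T i, ih, Finset.sum_range_succ]; ring
  -- z satisfies z (u+1) ≤ M z u
  have hwq : ∀ i, ω i + q i * (1 - ω i - δ' i) ≤ (1 - δ i) * q i := by
    intro i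
    have h := mul_le_mul_of_nonneg_left (hqδ i) (hq i).1.le
    have hq0 : q i ≠ 0 := (hq i).1.ne'
    have h2 : q i * ((1 - 1 / q i) * ω i) = (q i - 1) * ω i := by
      field_simp
    have h3 := (hω i).1; have h4 := (hq i).2
    nlinarith [h, h2]
  have hMv : ∀ (v : Fin n → ℝ) i, (M *ᵥ v) i = (1 - δ i) * v i + g i * s i * (Bp *ᵥ v) i := by
    intro v i
    simp only [Matrix.mulVec, dotProduct, hMentry, add_mul]
    rw [Finset.sum_add_distrib]
    have h1 : ∑ j : Fin n, (if i = j then 1 - δ i else 0) * v j = (1 - δ i) * v i := by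
      rw [Finset.sum_eq_single i]
      · simp
      · intro b _ hb; simp [Ne.symm hb]
      · intro h; exact absurd (Finset.mem_univ i) h
    have h2 : ∑ j : Fin n, g i * s i * Bp i j * v j
        = g i * s i * ∑ j : Fin n, Bp i j * v j := by
      rw [Finset.mul_sum]
      exact Finset.sum_congr rfl fun j _ => by ring
    rw [h1, h2]
  have hzstep : ∀ u i, z (u + 1) i ≤ (M *ᵥ z u) i := by
    intro u i
    rw [hMv]
    rw [hz]
    dsimp only
    rw [hxe u i, hye u i]
    have hPQ : (Bp *ᵥ x u) i ≤ (Bp *ᵥ z u) i := mv_mono Bp hBp (hxz u) i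
    have hP : 0 ≤ (Bp *ᵥ x u) i := by
      simp only [Matrix.mulVec, dotProduct]
      exact Finset.sum_nonneg fun j _ => mul_nonneg (hBp i j) (hx u j)
    have hgs : 0 ≤ g i * s i := mul_nonneg (hg0 i).le (hs i).1
    have hwqi := hwq i
    have hyi := hy u i
    have hgoal : (1 - δ i) * (x u i + q i * y u i) + g i * s i * (Bp *ᵥ z u) i
        - (x u i - δ i * x u i + α i * s i * (Bp *ᵥ x u) i + ω i * y u i
          + q i * ((1 - α i) * s i * (Bp *ᵥ x u) i + (1 - ω i - δ' i) * y u i)) =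
        g i * s i * ((Bp *ᵥ z u) i - (Bp *ᵥ x u) i)
          + ((1 - δ i) * q i - (ω i + q i * (1 - ω i - δ' i))) * y u i := by
      rw [hg]; ring
    nlinarith [mul_nonneg hgs (sub_nonneg.mpr hPQ),
      mul_nonneg (sub_nonneg.mpr hwqi) hyi]
  -- z u ≤ M^u z 0
  have hzM : ∀ u i, z u i ≤ (M ^ u *ᵥ z 0) i := by
    intro u
    induction u with
    | zero => intro i; simp [Matrix.one_mulVec]
    | succ u ih =>
        intro i
        calc z (u + 1) i ≤ (M *ᵥ z u) i := hzstep u i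
          _ ≤ (M *ᵥ (M ^ u *ᵥ z 0)) i := mv_mono M hM0 ih i
          _ = (M ^ (u + 1) *ᵥ z 0) i := by rw [Matrix.mulVec_mulVec, ← pow_succ']
  -- the key matrix identity for the RHS
  have hGdet : IsUnit (Matrix.diagonal g).det := by
    rw [Matrix.det_diagonal]
    exact isUnit_iff_ne_zero.mpr (Finset.prod_ne_zero_iff.mpr fun i _ => (hg0 i).ne')
  have hkey : (Matrix.diagonal g)⁻¹ * (Matrix.diagonal δ * (1 - M)⁻¹ - 1)
      = Matrix.diagonal s * Bp * (1 - M)⁻¹ := by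
    have h1 : Matrix.diagonal δ * (1 - M)⁻¹ - 1
        = Matrix.diagonal g * (Matrix.diagonal s * Bp * (1 - M)⁻¹) := by
      calc Matrix.diagonal δ * (1 - M)⁻¹ - 1
          = Matrix.diagonal δ * (1 - M)⁻¹ - (1 - M) * (1 - M)⁻¹ := by
            rw [Matrix.mul_nonsing_inv _ hMdet]
        _ = (Matrix.diagonal δ - (1 - M)) * (1 - M)⁻¹ := by noncomm_ring
        _ = (Matrix.diagonal g * Matrix.diagonal s * Bp) * (1 - M)⁻¹ := by
            congr 1
            rw [hMdef]
            abel
        _ = Matrix.diagonal g * (Matrix.diagonal s * Bp * (1 - M)⁻¹) := by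
            noncomm_ring
    rw [h1, ← Matrix.mul_assoc, Matrix.nonsing_inv_mul _ hGdet, one_mul]
  -- rewrite goal RHS
  rw [hkey]
  set z0 : Fin n → ℝ := x 0 + Matrix.diagonal q *ᵥ y 0 with hz0def
  have hz0e : ∀ i, z 0 i = z0 i := by
    intro i
    rw [hz0def, hz]
    simp [Matrix.mulVec_diagonal]
  set N : Matrix (Fin n) (Fin n) ℝ := (1 - M)⁻¹ with hNdef
  have hRHS : (fun _ => (1:ℝ)) ⬝ᵥ (Matrix.diagonal s * Bp * N) *ᵥ z0
      = ∑ i, s i * (Bp *ᵥ (N *ᵥ z0)) i := by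
    rw [← Matrix.mulVec_mulVec, ← Matrix.mulVec_mulVec]
    simp [dotProduct, Matrix.mulVec_diagonal]
  rw [hRHS]
  -- final chain
  have habs : ∀ i, |m t i - m 0 i| = ∑ u ∈ Finset.range t, s i * (Bp *ᵥ x u) i := by
    intro i
    rw [hsum t i]
    have hnn : 0 ≤ ∑ u ∈ Finset.range t, s i * (Bp *ᵥ x u) i := by
      refine Finset.sum_nonneg fun u _ => mul_nonneg (hs i).1 ?_
      simp only [Matrix.mulVec, dotProduct]
      exact Finset.sum_nonneg fun j _ => mul_nonneg (hBp i j) (hx u j)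
    rw [show m 0 i + ∑ u ∈ Finset.range t, s i * (Bp *ᵥ x u) i - m 0 i
      = ∑ u ∈ Finset.range t, s i * (Bp *ᵥ x u) i by ring, abs_of_nonneg hnn]
  simp only [habs]
  refine Finset.sum_le_sum fun i _ => ?_
  rw [← Finset.mul_sum]
  refine mul_le_mul_of_nonneg_left ?_ (hs i).1
  -- ∑_{u<t} (Bp x u) i ≤ (Bp (N z0)) i
  calc ∑ u ∈ Finset.range t, (Bp *ᵥ x u) i
      ≤ ∑ u ∈ Finset.range t, (Bp *ᵥ (M ^ u *ᵥ z 0)) i := by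
        refine Finset.sum_le_sum fun u _ => mv_mono Bp hBp (fun j => ?_) i
        exact le_trans (hxz u j) (hzM u j)
    _ = (Bp *ᵥ ((∑ u ∈ Finset.range t, M ^ u) *ᵥ z 0)) i := by
        simp only [Matrix.mulVec, dotProduct, Matrix.sum_apply, Finset.sum_mul,
          Finset.mul_sum]
        rw [Finset.sum_comm]
        refine Finset.sum_congr rfl fun j _ => ?_
        rw [Finset.sum_comm]
    _ ≤ (Bp *ᵥ (N *ᵥ z 0)) i := by
        refine mv_mono Bp hBp (fun j => ?_) i
        simp only [Matrix.mulVec, dotProduct]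
        exact Finset.sum_le_sum fun k _ =>
          mul_le_mul_of_nonneg_right (hSle t j k) (hz0 0 k)
    _ = (Bp *ᵥ (N *ᵥ z0)) i := by
        congr 1
        ext j
        congr 1
        ext k
        rw [hz0e k]
end

section
/- Fix q ∈ (0,1]ⁿ satisfying δ_i ≤ δ'_i + (1 − 1/q_i)·ω_i for every i, fix nonnegative initial vectors x(0), y(0) ∈ ℝⁿ, and let Q ⊆ {1,…,n}×{1,…,n} be a candidate edge set such that ρ(M_{−P}(q)) < 1 for every P ⊆ Q. Then the set function P ↦ σ^U(P) = 1ᵀ·(A + Q(I − A))^{−1}·(D·(I − M_{−P}(q))^{−1} − I)·(x(0) + Q·y(0)) is non-increasing: for all P ⊆ P' ⊆ Q one has σ^U(P') ≤ σ^U(P). (First part of Lemma 1.) -/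
open Matrix Filter Finset

/-- The upper-bound set function
`σᵁ(P) = 1ᵀ·(A + Q(I − A))⁻¹·(D·(I − M₋ₚ(q))⁻¹ − I)·(x0 + Q·y0)`. -/
noncomputable def sigmaU {n : ℕ} (α ω δ δ' s q x0 y0 : Fin n → ℝ)
    (B : Matrix (Fin n) (Fin n) ℝ) (P : Finset (Fin n × Fin n)) : ℝ :=
  (fun _ => (1 : ℝ)) ⬝ᵥ
    ((Matrix.diagonal α + Matrix.diagonal q * (1 - Matrix.diagonal α))⁻¹ *
      (Matrix.diagonal δ *
        (1 - (1 - Matrix.diagonal (fun i => min (δ i) (δ' i + (1 - 1 / q i) * ω i)) +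
          (Matrix.diagonal α + Matrix.diagonal q * (1 - Matrix.diagonal α)) *
            Matrix.diagonal s * Bdel B P))⁻¹ - 1)) *ᵥ
      (x0 + Matrix.diagonal q *ᵥ y0)

section Aux

attribute [local instance] Matrix.linftyOpNormedRing Matrix.linftyOpNormedAlgebra
  Matrix.linfty_opNormOneClass

lemma specRadius_lt_one {n : ℕ} (hn : 1 ≤ n) (M : Matrix (Fin n) (Fin n) ℝ)
    (hρ : specRad M < 1) : spectralRadius ℂ (M.map (Complex.ofReal)) < 1 := by
  haveI : Nonempty (Fin n) := ⟨⟨0, hn⟩⟩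
  set Mc := M.map (Complex.ofReal)
  have hbdd : BddAbove {r : ℝ | ∃ μ : ℂ, μ ∈ spectrum ℂ Mc ∧ r = ‖μ‖} := by
    refine ⟨‖Mc‖, fun r hr => ?_⟩
    obtain ⟨μ, hμ, rfl⟩ := hr
    simpa using spectrum.norm_le_norm_of_mem hμ
  have key : ∀ μ ∈ spectrum ℂ Mc, ‖μ‖ ≤ specRad M := fun μ hμ =>
    le_csSup hbdd ⟨μ, hμ, rfl⟩
  have h1 : spectralRadius ℂ Mc ≤ ENNReal.ofReal (specRad M) := by
    rw [spectralRadius]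
    refine iSup₂_le fun μ hμ => ?_
    have := key μ hμ
    rw [← enorm_eq_nnnorm, ← ofReal_norm]
    exact ENNReal.ofReal_le_ofReal (by simpa using this)
  exact lt_of_le_of_lt h1 (ENNReal.ofReal_lt_one.mpr hρ)

lemma nnnorm_map_ofReal {n : ℕ} (A : Matrix (Fin n) (Fin n) ℝ) :
    ‖A.map (Complex.ofReal)‖₊ = ‖A‖₊ := by
  simp [Matrix.linfty_opNNNorm_def]

lemma map_ofReal_pow {n : ℕ} (M : Matrix (Fin n) (Fin n) ℝ) (k : ℕ) :
    (M.map (Complex.ofReal)) ^ k = (M ^ k).map (Complex.ofReal) := by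
  have : ∀ N : Matrix (Fin n) (Fin n) ℝ, N.map Complex.ofReal
      = (Complex.ofRealHom.mapMatrix : Matrix (Fin n) (Fin n) ℝ →+* _) N := fun _ => rfl
  rw [this, this, ← map_pow]

lemma exists_geom_bound {n : ℕ} (hn : 1 ≤ n) (M : Matrix (Fin n) (Fin n) ℝ)
    (hρ : specRad M < 1) :
    ∃ t : ℝ, 0 ≤ t ∧ t < 1 ∧ ∀ᶠ k in atTop, ‖M ^ k‖ ≤ t ^ k := by
  set Mc := M.map (Complex.ofReal) with hMc
  obtain ⟨c, hc1, hc2⟩ := exists_between (specRadius_lt_one hn M hρ)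
  have hcne : c ≠ ⊤ := (hc2.trans_le le_top).ne
  refine ⟨c.toReal, ENNReal.toReal_nonneg, ?_, ?_⟩
  · have := ENNReal.toReal_lt_toReal hcne (by norm_num : (1:ENNReal) ≠ ⊤) |>.mpr hc2
    simpa using this
  · have hg := spectrum.pow_nnnorm_pow_one_div_tendsto_nhds_spectralRadius Mc
    have hev : ∀ᶠ k : ℕ in atTop, (‖Mc ^ k‖₊ : ENNReal) ^ (1 / (k:ℝ)) < c :=
      hg.eventually_lt_const (by rw [← hMc] at hc1; exact hc1)
    filter_upwards [hev, eventually_ge_atTop 1] with k hk hk1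
    have hkne : (k : ℝ) ≠ 0 := by positivity
    have h2 : (‖Mc ^ k‖₊ : ENNReal) ≤ c ^ (k : ℕ) := by
      have h := ENNReal.rpow_le_rpow hk.le (by positivity : (0:ℝ) ≤ (k:ℝ))
      have e1 : ((‖Mc ^ k‖₊ : ENNReal) ^ (1/(k:ℝ))) ^ (k:ℝ) = (‖Mc ^ k‖₊ : ENNReal) := by
        rw [← ENNReal.rpow_mul, one_div, inv_mul_cancel₀ hkne, ENNReal.rpow_one]
      rw [e1, ENNReal.rpow_natCast] at h
      exact h
    have h3 : ‖Mc ^ k‖ ≤ c.toReal ^ k := by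
      have h4 := ENNReal.toReal_le_toReal ENNReal.coe_ne_top
        (ENNReal.pow_ne_top hcne) |>.mpr h2
      rw [ENNReal.coe_toReal, coe_nnnorm, ENNReal.toReal_pow] at h4
      exact h4
    calc ‖M ^ k‖ = ‖Mc ^ k‖ := by
          rw [hMc, map_ofReal_pow, ← coe_nnnorm, ← coe_nnnorm, nnnorm_map_ofReal]
      _ ≤ c.toReal ^ k := h3

lemma neumann {n : ℕ} (hn : 1 ≤ n) (M : Matrix (Fin n) (Fin n) ℝ) (hρ : specRad M < 1) :
    Summable (fun k : ℕ => M ^ k) ∧ (1 - M)⁻¹ = ∑' k : ℕ, M ^ k := by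
  obtain ⟨t, ht0, ht1, hev⟩ := exists_geom_bound hn M hρ
  have hsum : Summable (fun k : ℕ => M ^ k) := by
    refine Summable.of_norm_bounded_eventually (g := fun k => t ^ k)
      (summable_geometric_of_lt_one ht0 ht1) ?_
    rwa [Nat.cofinite_eq_atTop]
  have hpow0 : Tendsto (fun k : ℕ => M ^ k) atTop (nhds 0) :=
    squeeze_zero_norm' hev (tendsto_pow_atTop_nhds_zero_of_lt_one ht0 ht1)
  set S := ∑' k : ℕ, M ^ k with hS
  have hHS : HasSum (fun k : ℕ => M ^ k) S := hsum.hasSum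
  have h2 : HasSum (fun k : ℕ => (1 - M) * M ^ k) ((1 - M) * S) := hHS.mul_left _
  have h3 := h2.tendsto_sum_nat
  have h4 : ∀ N : ℕ, ∑ k ∈ Finset.range N, (1 - M) * M ^ k = 1 - M ^ N := by
    intro N
    have he : ∀ k, (1 - M) * M ^ k = M ^ k - M ^ (k + 1) := by
      intro k; rw [sub_mul, one_mul, pow_succ']
    simp_rw [he]
    rw [Finset.sum_range_sub' (fun k => M ^ k), pow_zero]
  have h3' : Tendsto (fun N : ℕ => 1 - M ^ N) atTop (nhds ((1 - M) * S)) := by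
    simpa only [h4] using h3
  have h5 : Tendsto (fun N : ℕ => 1 - M ^ N) atTop
      (nhds ((1 : Matrix (Fin n) (Fin n) ℝ) - 0)) := tendsto_const_nhds.sub hpow0
  have h6 : (1 - M) * S = 1 := by
    have := tendsto_nhds_unique h3' h5
    simpa using this
  exact ⟨hsum, Matrix.inv_eq_right_inv h6⟩

lemma entry_hasSum {n : ℕ} {f : ℕ → Matrix (Fin n) (Fin n) ℝ} {a : Matrix (Fin n) (Fin n) ℝ}
    (h : HasSum f a) (i j : Fin n) : HasSum (fun k => f k i j) (a i j) :=
  (Pi.hasSum.mp ((Pi.hasSum.mp h) i)) j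

lemma pow_entry_mono {n : ℕ} {M' M : Matrix (Fin n) (Fin n) ℝ}
    (h0 : ∀ i j, 0 ≤ M' i j) (hle : ∀ i j, M' i j ≤ M i j) :
    ∀ k i j, 0 ≤ (M' ^ k) i j ∧ (M' ^ k) i j ≤ (M ^ k) i j := by
  intro k
  induction k with
  | zero => intro i j; simp [Matrix.one_apply]; split <;> norm_num
  | succ k ih =>
    intro i j
    rw [pow_succ, pow_succ, Matrix.mul_apply, Matrix.mul_apply]
    constructor
    · exact Finset.sum_nonneg fun l _ => mul_nonneg (ih i l).1 (h0 l j)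
    · refine Finset.sum_le_sum fun l _ => ?_
      exact mul_le_mul (ih i l).2 (hle l j) (h0 l j)
        (le_trans (ih i l).1 (ih i l).2)

/-- Key comparison: entries of `(1 - M')⁻¹` are dominated by those of `(1 - M)⁻¹`. -/
lemma inv_one_sub_entry_mono {n : ℕ} (hn : 1 ≤ n) {M' M : Matrix (Fin n) (Fin n) ℝ}
    (h0 : ∀ i j, 0 ≤ M' i j) (hle : ∀ i j, M' i j ≤ M i j)
    (hρ' : specRad M' < 1) (hρ : specRad M < 1) (i j : Fin n) :
    (1 - M')⁻¹ i j ≤ (1 - M)⁻¹ i j := by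
  obtain ⟨hs', he'⟩ := neumann hn M' hρ'
  obtain ⟨hs, he⟩ := neumann hn M hρ
  rw [he', he]
  have h1 := entry_hasSum hs'.hasSum i j
  have h2 := entry_hasSum hs.hasSum i j
  exact h1.tsum_eq ▸ h2.tsum_eq ▸
    Summable.tsum_le_tsum (fun k => (pow_entry_mono h0 hle k i j).2) h1.summable h2.summable

end Aux

/-- Lemma 1 (first part): `σᵁ` is non-increasing on subsets of the candidate set. -/
theorem sigmaU_nonincreasing
    (n : ℕ) (hn : 1 ≤ n) (α ω δ δ' s : Fin n → ℝ)
    (hα : ∀ i, 0 ≤ α i ∧ α i ≤ 1) (hω : ∀ i, 0 ≤ ω i ∧ ω i ≤ 1)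
    (hδ : ∀ i, 0 ≤ δ i ∧ δ i ≤ 1) (hδ' : ∀ i, 0 ≤ δ' i ∧ δ' i ≤ 1)
    (hs : ∀ i, 0 ≤ s i ∧ s i ≤ 1) (hωδ' : ∀ i, ω i + δ' i ≤ 1)
    (B : Matrix (Fin n) (Fin n) ℝ) (hB : ∀ i j, 0 ≤ B i j)
    (q : Fin n → ℝ) (hq : ∀ i, 0 < q i ∧ q i ≤ 1)
    (hqδ : ∀ i, δ i ≤ δ' i + (1 - 1 / q i) * ω i)
    (x0 y0 : Fin n → ℝ) (hx0 : ∀ i, 0 ≤ x0 i) (hy0 : ∀ i, 0 ≤ y0 i)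
    (Qc : Finset (Fin n × Fin n))
    (hρ : ∀ P ⊆ Qc, specRad
      (1 - Matrix.diagonal (fun i => min (δ i) (δ' i + (1 - 1 / q i) * ω i)) +
        (Matrix.diagonal α + Matrix.diagonal q * (1 - Matrix.diagonal α)) *
          Matrix.diagonal s * Bdel B P) < 1) :
    ∀ P P' : Finset (Fin n × Fin n), P ⊆ P' → P' ⊆ Qc →
      sigmaU α ω δ δ' s q x0 y0 B P' ≤ sigmaU α ω δ δ' s q x0 y0 B P := by
  intro P P' hPP' hP'Qc
  have hPQc : P ⊆ Qc := hPP'.trans hP'Qc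
  set c : Fin n → ℝ := fun i => min (δ i) (δ' i + (1 - 1 / q i) * ω i) with hc
  have hcδ : ∀ i, c i = δ i := fun i => min_eq_left (hqδ i)
  set e : Fin n → ℝ := fun i => α i + q i * (1 - α i) with he
  have hepos : ∀ i, 0 < e i := by
    intro i
    have h1 : α i * (1 - q i) ≥ 0 :=
      mul_nonneg (hα i).1 (by linarith [(hq i).2])
    have : e i = α i * (1 - q i) + q i := by simp only [he]; ring
    rw [this]
    linarith [(hq i).1]
  have hE : Matrix.diagonal α + Matrix.diagonal q * (1 - Matrix.diagonal α)
      = Matrix.diagonal e := by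
    ext i j
    by_cases h : i = j <;>
      simp [he, h, Matrix.add_apply, Matrix.sub_apply, Matrix.one_apply,
        Matrix.diagonal_apply, Matrix.diagonal_mul]
  have hEinv : (Matrix.diagonal e)⁻¹ = Matrix.diagonal (fun i => (e i)⁻¹) := by
    refine Matrix.inv_eq_right_inv ?_
    rw [Matrix.diagonal_mul_diagonal]
    have h : (fun i => e i * (e i)⁻¹) = fun _ => (1:ℝ) :=
      funext fun i => mul_inv_cancel₀ (hepos i).ne'
    rw [h, Matrix.diagonal_one]
  -- the iteration matrices
  have hBdel0 : ∀ (R : Finset (Fin n × Fin n)) i j, 0 ≤ Bdel B R i j := by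
    intro R i j
    simp only [Bdel, Matrix.of_apply]
    split
    · exact le_refl 0
    · exact hB i j
  have hentry : ∀ (R : Finset (Fin n × Fin n)) (i j : Fin n),
      (1 - Matrix.diagonal c + Matrix.diagonal e * Matrix.diagonal s * Bdel B R) i j
        = (if i = j then 1 - c i else 0) + e i * s i * Bdel B R i j := by
    intro R i j
    rw [Matrix.diagonal_mul_diagonal]
    simp only [Matrix.add_apply, Matrix.sub_apply, Matrix.one_apply, Matrix.diagonal_apply,
      Matrix.diagonal_mul, mul_assoc]
    split <;> simp
  have hM0 : ∀ (R : Finset (Fin n × Fin n)) (i j : Fin n),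
      0 ≤ (1 - Matrix.diagonal c + Matrix.diagonal e * Matrix.diagonal s * Bdel B R) i j := by
    intro R i j
    rw [hentry]
    refine add_nonneg ?_ (mul_nonneg (mul_nonneg (hepos i).le (hs i).1) (hBdel0 R i j))
    split
    · rw [hcδ]; linarith [(hδ i).2]
    · exact le_refl 0
  have hMle : ∀ i j : Fin n,
      (1 - Matrix.diagonal c + Matrix.diagonal e * Matrix.diagonal s * Bdel B P') i j
        ≤ (1 - Matrix.diagonal c + Matrix.diagonal e * Matrix.diagonal s * Bdel B P) i j := by
    intro i j
    rw [hentry, hentry]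
    refine add_le_add_right (mul_le_mul_of_nonneg_left ?_
      (mul_nonneg (hepos i).le (hs i).1)) _
    simp only [Bdel, Matrix.of_apply]
    by_cases h : (i, j) ∈ P'
    · simp only [h, if_true]
      split
      · exact le_refl 0
      · exact hB i j
    · have h2 : (i, j) ∉ P := fun hm => h (hPP' hm)
      simp [h, h2]
  have hρP : specRad (1 - Matrix.diagonal c + Matrix.diagonal e * Matrix.diagonal s
      * Bdel B P) < 1 := by
    have := hρ P hPQc; rwa [hE] at this
  have hρP' : specRad (1 - Matrix.diagonal c + Matrix.diagonal e * Matrix.diagonal s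
      * Bdel B P') < 1 := by
    have := hρ P' hP'Qc; rwa [hE] at this
  have hN := fun i j => inv_one_sub_entry_mono hn (hM0 P') hMle hρP' hρP i j
  -- unfold sigmaU
  simp only [sigmaU]
  rw [hE, hEinv]
  simp only [dotProduct, Matrix.mulVec, one_mul]
  refine Finset.sum_le_sum fun i _ => ?_
  refine Finset.sum_le_sum fun j _ => ?_
  have hXentry : ∀ X : Matrix (Fin n) (Fin n) ℝ,
      ((Matrix.diagonal fun i => (e i)⁻¹) * (Matrix.diagonal δ * X - 1)) i j
        = (e i)⁻¹ * (δ i * X i j - if i = j then 1 else 0) := by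
    intro X
    simp [Matrix.diagonal_mul, Matrix.sub_apply, Matrix.one_apply]
  rw [hXentry, hXentry]
  have hvj : 0 ≤ (x0 + Matrix.diagonal q *ᵥ y0) j := by
    have : (Matrix.diagonal q *ᵥ y0) j = q j * y0 j := by
      simp [Matrix.mulVec_diagonal]
    simp only [Pi.add_apply, this]
    exact add_nonneg (hx0 j) (mul_nonneg (hq j).1.le (hy0 j))
  refine mul_le_mul_of_nonneg_right ?_ hvj
  refine mul_le_mul_of_nonneg_left ?_ (inv_nonneg.mpr (hepos i).le)
  exact sub_le_sub_right (mul_le_mul_of_nonneg_left (hN i j) (hδ i).1) _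
end

section
/- Assume α_i ∈ (0,1] and ω_i + δ'_i > 0 for every i, fix nonnegative initial vectors x(0), y(0) ∈ ℝⁿ, and let Q ⊆ {1,…,n}×{1,…,n} be a candidate edge set such that ρ(N_{−P}) < 1 for every P ⊆ Q. Then the set function P ↦ σ^L(P) = 1ᵀ·A^{−1}·(D·(I − N_{−P})^{−1} − I)·(x(0) + W·(W + D')^{−1}·y(0)) is non-increasing: for all P ⊆ P' ⊆ Q one has σ^L(P') ≤ σ^L(P). (First part of Lemma 2.) -/
open Matrix Filter Finset

/-- The lower-bound set function
`σᴸ(P) = 1ᵀ·A⁻¹·(D·(I − N₋ₚ)⁻¹ − I)·(x0 + W·(W + D')⁻¹·y0)`. -/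
noncomputable def sigmaL {n : ℕ} (α ω δ δ' s x0 y0 : Fin n → ℝ)
    (B : Matrix (Fin n) (Fin n) ℝ) (P : Finset (Fin n × Fin n)) : ℝ :=
  (fun _ => (1 : ℝ)) ⬝ᵥ
    ((Matrix.diagonal α)⁻¹ *
      (Matrix.diagonal δ *
        (1 - (1 - Matrix.diagonal δ +
          Matrix.diagonal α * Matrix.diagonal s * Bdel B P))⁻¹ - 1)) *ᵥ
      (x0 + (Matrix.diagonal ω * (Matrix.diagonal ω + Matrix.diagonal δ')⁻¹) *ᵥ y0)


section Aux
open Topology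

attribute [local instance] Matrix.linftyOpNormedAddCommGroup Matrix.linftyOpNormedRing
  Matrix.linftyOpNormedAlgebra

noncomputable instance (n : ℕ) : CompleteSpace (Matrix (Fin n) (Fin n) ℂ) :=
  FiniteDimensional.complete ℂ _

lemma entry_le_norm {n : ℕ} (A : Matrix (Fin n) (Fin n) ℂ) (i j : Fin n) :
    ‖A i j‖ ≤ ‖A‖ := by
  have h1 : ‖A i j‖₊ ≤ ‖A‖₊ := by
    rw [Matrix.linfty_opNNNorm_def]
    exact le_trans (Finset.single_le_sum (f := fun j => ‖A i j‖₊)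
      (fun _ _ => zero_le) (Finset.mem_univ j))
      (Finset.le_sup (f := fun i => ∑ j, ‖A i j‖₊) (Finset.mem_univ i))
  exact_mod_cast h1

lemma map_one_sub {n : ℕ} (M : Matrix (Fin n) (Fin n) ℝ) :
    (1 - M).map Complex.ofReal = 1 - M.map Complex.ofReal := by
  ext i j
  by_cases h : i = j <;> simp [Matrix.sub_apply, Matrix.one_apply, h]

lemma spectralRadius_lt_one {n : ℕ} (M : Matrix (Fin n) (Fin n) ℝ) (h : specRad M < 1) :
    spectralRadius ℂ (M.map Complex.ofReal) < 1 := by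
  set a := M.map (Complex.ofReal) with ha
  have hb : Bornology.IsBounded (spectrum ℂ a) := spectrum.isBounded a
  obtain ⟨C, hC⟩ := hb.exists_norm_le
  have hbdd : BddAbove {r : ℝ | ∃ μ : ℂ, μ ∈ spectrum ℂ a ∧ r = ‖μ‖} := by
    refine ⟨C, fun r hr => ?_⟩
    obtain ⟨μ, hμ, rfl⟩ := hr
    exact hC μ hμ
  have key : ∀ μ ∈ spectrum ℂ a, (‖μ‖₊ : ENNReal) ≤ ENNReal.ofReal (specRad M) := by
    intro μ hμ
    have h1 : ‖μ‖ ≤ specRad M := le_csSup hbdd ⟨μ, hμ, rfl⟩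
    rw [← ENNReal.ofReal_coe_nnreal, coe_nnnorm]
    exact ENNReal.ofReal_le_ofReal h1
  calc spectralRadius ℂ a ≤ ENNReal.ofReal (specRad M) := iSup₂_le key
    _ < 1 := ENNReal.ofReal_lt_one.mpr h

lemma isUnit_one_sub_det {n : ℕ} (M : Matrix (Fin n) (Fin n) ℝ) (h : specRad M < 1) :
    IsUnit (1 - M).det := by
  have hs := spectralRadius_lt_one M h
  have h1 : (1 : ℂ) ∉ spectrum ℂ (M.map Complex.ofReal) := by
    intro hmem
    have h1' := lt_of_le_of_lt (le_iSup₂ (f := fun μ (_ : μ ∈ spectrum ℂ (M.map Complex.ofReal)) =>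
      (‖μ‖₊ : ENNReal)) 1 hmem) hs
    simp at h1'
  rw [spectrum.notMem_iff] at h1
  have h2 : (algebraMap ℂ (Matrix (Fin n) (Fin n) ℂ)) 1 - M.map Complex.ofReal
      = (1 - M).map Complex.ofReal := by
    rw [map_one_sub M, _root_.map_one]
  rw [h2] at h1
  have h3 : ((1 - M).map Complex.ofReal).det ≠ 0 :=
    ((Matrix.isUnit_iff_isUnit_det _).mp h1).ne_zero
  rw [show (1 - M).map Complex.ofReal = Complex.ofRealHom.mapMatrix (1 - M) from rfl,
    ← RingHom.map_det] at h3
  simp only [Complex.ofRealHom_eq_coe, ne_eq, Complex.ofReal_eq_zero] at h3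
  exact isUnit_iff_ne_zero.mpr h3

lemma pow_tendsto_zero {n : ℕ} (M : Matrix (Fin n) (Fin n) ℝ) (h : specRad M < 1) (i j : Fin n) :
    Tendsto (fun m : ℕ => (M ^ m) i j) atTop (𝓝 0) := by
  set a := M.map (Complex.ofReal) with ha
  have hs := spectralRadius_lt_one M h
  obtain ⟨r, hLr, hr1⟩ := exists_between hs
  have hev : ∀ᶠ m : ℕ in atTop, (‖a ^ m‖₊ : ENNReal) ^ (1 / (m : ℝ)) < r :=
    (spectrum.pow_nnnorm_pow_one_div_tendsto_nhds_spectralRadius a).eventually_lt_const hLr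
  have hbound : ∀ᶠ m : ℕ in atTop, (‖a ^ m‖₊ : ENNReal) ≤ r ^ m := by
    filter_upwards [hev, eventually_ge_atTop 1] with m hm hm1
    have hm0 : (m : ℝ) ≠ 0 := by positivity
    have h1 : (‖a ^ m‖₊ : ENNReal) = ((‖a ^ m‖₊ : ENNReal) ^ (1 / (m : ℝ))) ^ (m : ℝ) := by
      rw [← ENNReal.rpow_mul, one_div, inv_mul_cancel₀ hm0, ENNReal.rpow_one]
    rw [h1, ← ENNReal.rpow_natCast r m]
    exact ENNReal.rpow_le_rpow hm.le (by positivity)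
  have hr0 : Tendsto (fun m : ℕ => r ^ m) atTop (𝓝 0) :=
    ENNReal.tendsto_pow_atTop_nhds_zero_of_lt_one hr1
  have hnn : Tendsto (fun m : ℕ => (‖a ^ m‖₊ : ENNReal)) atTop (𝓝 0) :=
    tendsto_of_tendsto_of_tendsto_of_le_of_le' tendsto_const_nhds hr0
      (Eventually.of_forall fun _ => zero_le) hbound
  rw [← ENNReal.coe_zero, ENNReal.tendsto_coe] at hnn
  have hnorm : Tendsto (fun m : ℕ => ‖a ^ m‖) atTop (𝓝 0) := by
    have := NNReal.tendsto_coe.mpr hnn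
    simpa using this
  refine squeeze_zero_norm (fun m => ?_) hnorm
  have hmap : (a ^ m) i j = Complex.ofReal ((M ^ m) i j) := by
    rw [ha, show M.map Complex.ofReal = Complex.ofRealHom.mapMatrix M from rfl, ← map_pow]
    rfl
  calc ‖(M ^ m) i j‖ = ‖(a ^ m) i j‖ := by rw [hmap]; simp
    _ ≤ ‖a ^ m‖ := entry_le_norm _ i j

lemma pow_entries_nonneg {n : ℕ} (M : Matrix (Fin n) (Fin n) ℝ) (hM : ∀ i j, 0 ≤ M i j)
    (k : ℕ) : ∀ i j, 0 ≤ (M ^ k) i j := by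
  induction k with
  | zero => intro i j; rw [pow_zero]; by_cases h : i = j <;> simp [Matrix.one_apply, h]
  | succ k ih =>
    intro i j
    rw [pow_succ, Matrix.mul_apply]
    exact Finset.sum_nonneg fun l _ => mul_nonneg (ih i l) (hM l j)

lemma inv_one_sub_entries_nonneg {n : ℕ} (M : Matrix (Fin n) (Fin n) ℝ)
    (hM : ∀ i j, 0 ≤ M i j) (h : specRad M < 1) : ∀ i j, 0 ≤ (1 - M)⁻¹ i j := by
  intro i j
  have hdet := isUnit_one_sub_det M h
  set Y := (1 - M)⁻¹ with hY
  set S : ℕ → Matrix (Fin n) (Fin n) ℝ := fun m => ∑ k ∈ Finset.range m, M ^ k with hSdef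
  have hgeo : ∀ m, S m * (1 - M) = 1 - M ^ m := by
    intro m
    have h1 : S m * (1 - M) = -(S m * (M - 1)) := by noncomm_ring
    rw [h1, geom_sum_mul, neg_sub]
  have hS : ∀ m, S m = (1 - M ^ m) * Y := by
    intro m
    calc S m = S m * ((1 - M) * Y) := by rw [Matrix.mul_nonsing_inv _ hdet, mul_one]
      _ = (S m * (1 - M)) * Y := by rw [mul_assoc]
      _ = (1 - M ^ m) * Y := by rw [hgeo]
  have hlim : Tendsto (fun m => S m i j) atTop (𝓝 (Y i j)) := by
    have h1 : ∀ m, S m i j = ∑ k, ((1 : Matrix (Fin n) (Fin n) ℝ) i k - (M ^ m) i k) * Y k j := by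
      intro m
      simp [hS m, Matrix.mul_apply, Matrix.sub_apply]
    simp_rw [h1]
    have h2 : Y i j = ∑ k, ((1 : Matrix (Fin n) (Fin n) ℝ) i k - 0) * Y k j := by
      simp_rw [sub_zero, ← Matrix.mul_apply, Matrix.one_mul]
    rw [h2]
    exact tendsto_finset_sum _ fun k _ =>
      ((tendsto_const_nhds.sub (pow_tendsto_zero M h i k)).mul tendsto_const_nhds)
  refine ge_of_tendsto' hlim fun m => ?_
  rw [hSdef]
  simp only [Matrix.sum_apply]
  exact Finset.sum_nonneg fun k _ => pow_entries_nonneg M hM k i j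

lemma inv_one_sub_mono {n : ℕ} (M M' : Matrix (Fin n) (Fin n) ℝ)
    (hM : ∀ i j, 0 ≤ M i j) (hM' : ∀ i j, 0 ≤ M' i j)
    (h : specRad M < 1) (h' : specRad M' < 1)
    (hle : ∀ i j, M' i j ≤ M i j) : ∀ i j, (1 - M')⁻¹ i j ≤ (1 - M)⁻¹ i j := by
  intro i j
  have hdet := isUnit_one_sub_det M h
  have hdet' := isUnit_one_sub_det M' h'
  set X := (1 - M)⁻¹ with hX
  set X' := (1 - M')⁻¹ with hX'
  have hXn := inv_one_sub_entries_nonneg M hM h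
  have hX'n := inv_one_sub_entries_nonneg M' hM' h'
  have key : X' - X = X' * (M' - M) * X := by
    have h1 : M' - M = (1 - M) - (1 - M') := by abel
    rw [h1, mul_sub, sub_mul, mul_assoc, Matrix.mul_nonsing_inv _ hdet, mul_one,
      Matrix.nonsing_inv_mul _ hdet', one_mul]
  have h2 : (X' - X) i j ≤ 0 := by
    rw [key, Matrix.mul_apply]
    refine Finset.sum_nonpos fun l _ => ?_
    have h3 : (X' * (M' - M)) i l ≤ 0 := by
      rw [Matrix.mul_apply]
      refine Finset.sum_nonpos fun k _ => ?_
      exact mul_nonpos_of_nonneg_of_nonpos (hX'n i k) (by rw [Matrix.sub_apply]; linarith [hle k l])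
    exact mul_nonpos_of_nonpos_of_nonneg h3 (hXn l j)
  rw [Matrix.sub_apply] at h2
  linarith

lemma ring_inverse_pi {n : ℕ} (f : Fin n → ℝ) (hf : ∀ i, f i ≠ 0) :
    Ring.inverse f = fun i => (f i)⁻¹ := by
  have h1 : f * (fun i => (f i)⁻¹) = 1 := by
    funext i
    simp [Pi.mul_apply, mul_inv_cancel₀ (hf i)]
  have h2 : (fun i => (f i)⁻¹) * f = 1 := by
    funext i
    simp [Pi.mul_apply, inv_mul_cancel₀ (hf i)]
  exact Ring.inverse_unit ⟨f, fun i => (f i)⁻¹, h1, h2⟩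

end Aux

/-- Lemma 2 (first part): `σᴸ` is non-increasing on subsets of the candidate set. -/
theorem sigmaL_nonincreasing
    (n : ℕ) (hn : 1 ≤ n) (α ω δ δ' s : Fin n → ℝ)
    (hα : ∀ i, 0 < α i ∧ α i ≤ 1) (hω : ∀ i, 0 ≤ ω i ∧ ω i ≤ 1)
    (hδ : ∀ i, 0 ≤ δ i ∧ δ i ≤ 1) (hδ' : ∀ i, 0 ≤ δ' i ∧ δ' i ≤ 1)
    (hs : ∀ i, 0 ≤ s i ∧ s i ≤ 1) (hωδ' : ∀ i, ω i + δ' i ≤ 1)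
    (hωδ'pos : ∀ i, 0 < ω i + δ' i)
    (B : Matrix (Fin n) (Fin n) ℝ) (hB : ∀ i j, 0 ≤ B i j)
    (x0 y0 : Fin n → ℝ) (hx0 : ∀ i, 0 ≤ x0 i) (hy0 : ∀ i, 0 ≤ y0 i)
    (Qc : Finset (Fin n × Fin n))
    (hρ : ∀ P ⊆ Qc, specRad
      (1 - Matrix.diagonal δ + Matrix.diagonal α * Matrix.diagonal s * Bdel B P) < 1) :
    ∀ P P' : Finset (Fin n × Fin n), P ⊆ P' → P' ⊆ Qc →
      sigmaL α ω δ δ' s x0 y0 B P' ≤ sigmaL α ω δ δ' s x0 y0 B P := by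
  intro P P' hPP' hP'Q
  set N : Finset (Fin n × Fin n) → Matrix (Fin n) (Fin n) ℝ := fun Q =>
    1 - Matrix.diagonal δ + Matrix.diagonal α * Matrix.diagonal s * Bdel B Q with hN
  have hBd : ∀ Q i j, 0 ≤ Bdel B Q i j := by
    intro Q i j
    simp only [Bdel, Matrix.of_apply]
    split
    · exact le_refl 0
    · exact hB i j
  have hentry : ∀ Q (i j : Fin n),
      N Q i j = (if i = j then 1 - δ i else 0) + α i * s i * Bdel B Q i j := by
    intro Q i j
    simp only [hN, Matrix.add_apply, Matrix.sub_apply, Matrix.one_apply,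
      Matrix.diagonal_mul_diagonal, Matrix.diagonal_mul, Matrix.diagonal_apply]
    by_cases h : i = j <;> simp [h]
  have hNpos : ∀ Q, ∀ i j : Fin n, 0 ≤ N Q i j := by
    intro Q i j
    rw [hentry]
    have h1 : 0 ≤ α i * s i * Bdel B Q i j :=
      mul_nonneg (mul_nonneg (hα i).1.le (hs i).1) (hBd Q i j)
    by_cases h : i = j
    · subst h; simp only [if_true, eq_self_iff_true]; linarith [(hδ i).2, h1]
    · simpa [h] using h1
  have hmono : ∀ i j : Fin n, N P' i j ≤ N P i j := by
    intro i j
    rw [hentry, hentry]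
    refine add_le_add_right (mul_le_mul_of_nonneg_left ?_
      (mul_nonneg (hα i).1.le (hs i).1)) _
    simp only [Bdel, Matrix.of_apply]
    split
    · split
      · exact le_refl 0
      · exact hB i j
    · next hnot =>
      split
      · exact absurd (hPP' ‹(i, j) ∈ P›) hnot
      · exact le_refl _
  have hX := inv_one_sub_mono (N P) (N P') (hNpos P) (hNpos P')
    (hρ P (hPP'.trans hP'Q)) (hρ P' hP'Q) hmono
  have hXn := inv_one_sub_entries_nonneg (N P) (hNpos P) (hρ P (hPP'.trans hP'Q))
  -- the vector v
  set v : Fin n → ℝ :=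
    x0 + (Matrix.diagonal ω * (Matrix.diagonal ω + Matrix.diagonal δ')⁻¹) *ᵥ y0 with hv
  have hWD : Matrix.diagonal ω * (Matrix.diagonal ω + Matrix.diagonal δ')⁻¹
      = Matrix.diagonal (fun i => ω i * (ω i + δ' i)⁻¹) := by
    rw [Matrix.diagonal_add, Matrix.inv_diagonal,
      ring_inverse_pi _ (fun i => (hωδ'pos i).ne'), Matrix.diagonal_mul_diagonal]
  have hvpos : ∀ i, 0 ≤ v i := by
    intro i
    rw [hv]
    simp only [Pi.add_apply, hWD, Matrix.mulVec_diagonal]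
    have := hωδ'pos i
    have h1 : 0 ≤ ω i * (ω i + δ' i)⁻¹ * y0 i :=
      mul_nonneg (mul_nonneg (hω i).1 (by positivity)) (hy0 i)
    linarith [hx0 i]
  -- the matrix difference
  set E : Finset (Fin n × Fin n) → Matrix (Fin n) (Fin n) ℝ := fun Q =>
    (Matrix.diagonal α)⁻¹ * (Matrix.diagonal δ * (1 - N Q)⁻¹ - 1) with hE
  have hEdiff : E P - E P' = (Matrix.diagonal α)⁻¹ *
      (Matrix.diagonal δ * ((1 - N P)⁻¹ - (1 - N P')⁻¹)) := by
    simp only [hE]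
    rw [← mul_sub]
    congr 1
    noncomm_ring
  have hαinv : (Matrix.diagonal α)⁻¹ = Matrix.diagonal (fun i => (α i)⁻¹) := by
    rw [Matrix.inv_diagonal, ring_inverse_pi _ (fun i => (hα i).1.ne')]
  have hEnn : ∀ i j : Fin n, 0 ≤ (E P - E P') i j := by
    intro i j
    rw [hEdiff, hαinv, Matrix.diagonal_mul, Matrix.diagonal_mul, Matrix.sub_apply]
    have := (hα i).1
    exact mul_nonneg (by positivity) (mul_nonneg (hδ i).1 (by linarith [hX i j]))
  have hkey : sigmaL α ω δ δ' s x0 y0 B P - sigmaL α ω δ δ' s x0 y0 B P'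
      = (fun _ => (1 : ℝ)) ⬝ᵥ ((E P - E P') *ᵥ v) := by
    simp only [sigmaL, hE, hN, hv]
    rw [← dotProduct_sub, ← Matrix.sub_mulVec]
  have hfinal : 0 ≤ (fun _ => (1 : ℝ)) ⬝ᵥ ((E P - E P') *ᵥ v) := by
    rw [dotProduct]
    refine Finset.sum_nonneg fun i _ => ?_
    rw [one_mul, Matrix.mulVec, dotProduct]
    exact Finset.sum_nonneg fun j _ => mul_nonneg (hEnn i j) (hvpos j)
  linarith [hkey ▸ hfinal]
end
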